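/- Let d ≥ 1 and let α : Fin d → ℤ with α_i ≥ 1 for all i, and let V = {v ∈ ℝ^d : v_i = ±α_i for all i} be the vertex set of the integer box K = {x : |x_i| ≤ α_i}. If R is a d×d real orthogonal matrix with ‖R − I‖ · √(Σ_i α_i²) < 1 and Rv ∈ ℤ^d for every v ∈ V, then R = I. (Small rotations mapping all vertices of an integer box to lattice points are trivial.) -/
import Mathlib


open scoped Pointwise Matrix

noncomputable section

/-- The integer lattice `ℤ^d` inside `ℝ^d` (with the Euclidean structure). -/
def intLattice (d : ℕ) : Set (EuclideanSpace ℝ (Fin d)) :=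
  {x | ∀ i, ∃ n : ℤ, x i = n}

/-- The lattice point enumerator `G(K) = |K ∩ ℤ^d|`. -/
def latticeCount {d : ℕ} (K : Set (EuclideanSpace ℝ (Fin d))) : ℕ :=
  (K ∩ intLattice d).ncard

/-- The `i`-th successive minimum of `K` with respect to `ℤ^d`:
`λ_i(K) = inf {λ > 0 : dim span((λ•K) ∩ ℤ^d) ≥ i}`. -/
def succMin {d : ℕ} (K : Set (EuclideanSpace ℝ (Fin d))) (i : ℕ) : ℝ :=
  sInf {lam : ℝ | 0 < lam ∧
    i ≤ Module.finrank ℝ (Submodule.span ℝ ((lam • K) ∩ intLattice d))}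

/-- Operator norm of a `d × d` real matrix acting on Euclidean `ℝ^d`. -/
def matOpNorm {d : ℕ} (A : Matrix (Fin d) (Fin d) ℝ) : ℝ :=
  ‖Matrix.toEuclideanCLM (𝕜 := ℝ) A‖

/-- Small rotations mapping all vertices of an integer box to lattice points are trivial. -/
theorem rotation_preserving_vertices_trivial (d : ℕ) (hd : 1 ≤ d)
    (α : Fin d → ℤ) (hα : ∀ i, 1 ≤ α i)
    (R : Matrix (Fin d) (Fin d) ℝ) (hR : Rᵀ * R = 1)
    (hsmall : matOpNorm (R - 1) * Real.sqrt (∑ i, (α i : ℝ) ^ 2) < 1)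
    (hvert : ∀ v : EuclideanSpace ℝ (Fin d),
      (∀ i, v i = (α i : ℝ) ∨ v i = -(α i : ℝ)) →
      Matrix.toEuclideanLin R v ∈ intLattice d) :
    R = 1 := by
  classical
  -- every vertex is fixed
  have key : ∀ v : EuclideanSpace ℝ (Fin d),
      (∀ i, v i = (α i : ℝ) ∨ v i = -(α i : ℝ)) →
      Matrix.toEuclideanLin R v = v := by
    intro v hv
    set w : EuclideanSpace ℝ (Fin d) := Matrix.toEuclideanLin R v - v with hwdef
    have hvnorm : ‖v‖ = Real.sqrt (∑ i, (α i : ℝ) ^ 2) := by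
      rw [EuclideanSpace.norm_eq]
      congr 1
      refine Finset.sum_congr rfl fun i _ => ?_
      rcases hv i with h | h <;> rw [h] <;> simp [sq_abs] <;> ring
    have hCLM : w = Matrix.toEuclideanCLM (𝕜 := ℝ) (R - 1) v := by
      rw [map_sub, map_one, hwdef]
      have : (Matrix.toEuclideanCLM (𝕜 := ℝ) R) v = Matrix.toEuclideanLin R v := by
        exact congrFun (congrArg DFunLike.coe
          (Matrix.coe_toEuclideanCLM_eq_toEuclideanLin (A := R))) v
      simp [this]
    have hwnorm : ‖w‖ < 1 := by
      rw [hCLM]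
      calc ‖Matrix.toEuclideanCLM (𝕜 := ℝ) (R - 1) v‖
          ≤ matOpNorm (R - 1) * ‖v‖ := ContinuousLinearMap.le_opNorm _ v
        _ = matOpNorm (R - 1) * Real.sqrt (∑ i, (α i : ℝ) ^ 2) := by rw [hvnorm]
        _ < 1 := hsmall
    have hwint : ∀ i, ∃ n : ℤ, w i = n := by
      intro i
      obtain ⟨n, hn⟩ := hvert v hv i
      rcases hv i with h | h
      · exact ⟨n - α i, by simp [hwdef, hn, h]⟩
      · exact ⟨n + α i, by simp [hwdef, hn, h]; try ring⟩
    have hwz : w = 0 := by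
      ext i
      obtain ⟨n, hn⟩ := hwint i
      have hle : |w i| ≤ ‖w‖ := by
        rw [EuclideanSpace.norm_eq]
        have : |w i| = Real.sqrt ((w i) ^ 2) := by rw [Real.sqrt_sq_eq_abs]
        rw [this]
        apply Real.sqrt_le_sqrt
        calc (w i) ^ 2 ≤ ∑ j, ‖w j‖ ^ 2 := by
              refine Finset.single_le_sum (f := fun j => ‖w j‖ ^ 2) ?_ (Finset.mem_univ i)
                |>.trans_eq' ?_
              · intro j _; positivity
              · simp [sq_abs]
        _ = _ := rfl
      have : |(n : ℝ)| < 1 := by rw [← hn]; exact hle.trans_lt hwnorm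
      have hn0 : n = 0 := by
        have h2 : |n| < 1 := by exact_mod_cast this
        exact Int.abs_lt_one_iff.mp h2
      simp [hn, hn0]
    have := sub_eq_zero.mp (hwdef ▸ hwz)
    exact this
  have happly : ∀ (x : EuclideanSpace ℝ (Fin d)) (j : Fin d),
      (Matrix.toEuclideanLin R x) j = ∑ k, R j k * x k := by
    intro x j
    simp [Matrix.toEuclideanLin_apply, Matrix.mulVec, dotProduct]
  have hcol : ∀ i j, R j i = if j = i then 1 else 0 := by
    intro i j
    let vp : EuclideanSpace ℝ (Fin d) :=
      (WithLp.equiv 2 (Fin d → ℝ)).symm (fun k => (α k : ℝ))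
    let vm : EuclideanSpace ℝ (Fin d) :=
      (WithLp.equiv 2 (Fin d → ℝ)).symm
        (fun k => if k = i then -(α k : ℝ) else (α k : ℝ))
    have h1 : Matrix.toEuclideanLin R vp = vp := key vp (fun k => Or.inl (by simp [vp]))
    have h2 : Matrix.toEuclideanLin R vm = vm := key vm (fun k => by
      by_cases h : k = i
      · exact Or.inr (by simp [vm, h])
      · exact Or.inl (by simp [vm, h]))
    have h3 : Matrix.toEuclideanLin R (vp - vm) = vp - vm := by
      rw [map_sub, h1, h2]
    have hdiff : ∀ k, (vp - vm) k = if k = i then 2 * (α i : ℝ) else 0 := by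
      intro k
      by_cases h : k = i <;> simp [vp, vm, h] <;> ring
    have h4 := congrArg (fun y : EuclideanSpace ℝ (Fin d) => y j) h3
    simp only [happly] at h4
    rw [hdiff j] at h4
    have h5 : ∑ k, R j k * ((vp - vm) k) = R j i * (2 * (α i : ℝ)) := by
      rw [Finset.sum_eq_single i]
      · rw [hdiff i]; simp
      · intro k _ hk; rw [hdiff k]; simp [hk]
      · simp
    rw [h5] at h4
    have hαi : (2 : ℝ) * (α i : ℝ) ≠ 0 := by
      have := hα i; positivity
    by_cases h : j = i
    · subst h
      simp only [if_pos rfl] at h4 ⊢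
      exact mul_right_cancel₀ hαi (h4.trans (one_mul _).symm)
    · simp only [if_neg h] at h4 ⊢
      exact (mul_eq_zero.mp h4).resolve_right hαi
  ext j i
  rw [hcol i j]
  simp [Matrix.one_apply]
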